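/- Let U_n (n ∈ ℕ) be pairwise disjoint sets, each with a group G_n acting transitively, with |U_n| ≥ 2, and let U = ⋃_n U_n with G = ∏_n G_n acting coordinatewise. Suppose f : U → U ∪ {*} is a surjection whose graph is invariant under every element of G fixing ⋃_{k<N} U_k pointwise (for some N). Then for every i ≥ N, f⁻¹(U_i) ⊆ U_i, and consequently f restricted to ⋃_{k<N} U_k surjects onto ⋃_{k<N} U_k ∪ {*}. -/

import Mathlib

/-- For pairwise disjoint sets U_n (modelled as the summands of a sigma type)
with transitive group actions and at least two elements each, any surjection
f : U → U ∪ {*} whose graph is invariant under every element of the product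
group fixing the first N summands pointwise satisfies f⁻¹(U_i) ⊆ U_i for all
i ≥ N, and consequently f restricted to the first N summands surjects onto
their union together with {*}. -/
theorem stmt17 {X : ℕ → Type*} [∀ n, Nontrivial (X n)]
    (G : ∀ n, Subgroup (Equiv.Perm (X n)))
    (htrans : ∀ n, ∀ x y : X n, ∃ g ∈ G n, g x = y)
    (f : (Σ n, X n) → Option (Σ n, X n)) (N : ℕ)
    (hsurj : Function.Surjective f)
    (hsupp : ∀ g : ∀ n, Equiv.Perm (X n), (∀ n, g n ∈ G n) →
      (∀ k, k < N → ∀ x : X k, g k x = x) →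
      ∀ u : Σ n, X n,
        f ⟨u.1, g u.1 u.2⟩ =
          Option.map (fun v : Σ n, X n => (⟨v.1, g v.1 v.2⟩ : Σ n, X n)) (f u)) :
    (∀ i, N ≤ i → ∀ u : Σ n, X n, ∀ x : X i, f u = some ⟨i, x⟩ → u.1 = i) ∧
      (∀ v : Option (Σ n, X n),
        (v = none ∨ ∃ k, k < N ∧ ∃ x : X k, v = some ⟨k, x⟩) →
          ∃ u : Σ n, X n, u.1 < N ∧ f u = v) := by
  -- Part 1
  have part1 : ∀ i, N ≤ i → ∀ u : Σ n, X n, ∀ x : X i, f u = some ⟨i, x⟩ → u.1 = i := by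
    intro i hNi u x hfu
    by_contra hne
    obtain ⟨y, hy⟩ := exists_ne x
    obtain ⟨σ, hσG, hσx⟩ := htrans i x y
    set g : ∀ n, Equiv.Perm (X n) := Function.update (fun _ => 1) i σ with hg
    have hgi : g i = σ := by rw [hg]; simp
    have hgne : ∀ n, n ≠ i → g n = 1 := fun n hn => by rw [hg]; simp [Function.update_of_ne hn]
    have hmem : ∀ n, g n ∈ G n := by
      intro n
      by_cases h : n = i
      · subst h; rw [hgi]; exact hσG
      · rw [hgne n h]; exact (G n).one_mem
    have hfix : ∀ k, k < N → ∀ z : X k, g k z = z := by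
      intro k hk z
      have : k ≠ i := fun h => absurd (h ▸ hk) (not_lt.mpr hNi)
      rw [hgne k this]; rfl
    have := hsupp g hmem hfix u
    rw [hgne u.1 hne] at this
    simp only [Equiv.Perm.coe_one, id_eq, Sigma.eta] at this
    rw [hfu] at this
    simp only [Option.map_some] at this
    rw [hgi] at this
    have h2 := Option.some_injective _ this
    have hx : x = σ x := eq_of_heq (Sigma.mk.inj_iff.mp h2).2
    rw [hσx] at hx
    exact hy hx.symm
  refine ⟨part1, ?_⟩
  -- constancy lemma
  have hconst : ∀ m, N ≤ m → ∀ (a b : X m) (v : Option (Σ n, X n)),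
      (v = none ∨ ∃ k, k < N ∧ ∃ x : X k, v = some ⟨k, x⟩) →
      f ⟨m, a⟩ = v → f ⟨m, b⟩ = v := by
    intro m hNm a b v hv hfa
    obtain ⟨σ, hσG, hσa⟩ := htrans m a b
    set g : ∀ n, Equiv.Perm (X n) := Function.update (fun _ => 1) m σ with hg
    have hgm : g m = σ := by rw [hg]; simp
    have hgne : ∀ n, n ≠ m → g n = 1 := fun n hn => by rw [hg]; simp [Function.update_of_ne hn]
    have hmem : ∀ n, g n ∈ G n := by
      intro n
      by_cases h : n = m
      · subst h; rw [hgm]; exact hσG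
      · rw [hgne n h]; exact (G n).one_mem
    have hfix : ∀ k, k < N → ∀ z : X k, g k z = z := by
      intro k hk z
      have : k ≠ m := fun h => absurd (h ▸ hk) (not_lt.mpr hNm)
      rw [hgne k this]; rfl
    have key := hsupp g hmem hfix ⟨m, a⟩
    simp only at key
    rw [hgm, hσa, hfa] at key
    rcases hv with rfl | ⟨k, hk, x, rfl⟩
    · simpa using key
    · have hkm : k ≠ m := fun h => absurd (h ▸ hk) (not_lt.mpr hNm)
      rw [key]
      simp only [Option.map_some]
      rw [hgne k hkm]
      rfl
  intro v hv
  obtain ⟨u, hu⟩ := hsurj v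
  refine ⟨u, ?_, hu⟩
  by_contra hlt
  push_neg at hlt
  obtain ⟨m, a⟩ := u
  simp only at hlt
  obtain ⟨x₀⟩ : Nonempty (X m) := inferInstance
  obtain ⟨w, hw⟩ := hsurj (some ⟨m, x₀⟩)
  have hw1 : w.1 = m := part1 m hlt w x₀ hw
  obtain ⟨wm, wx⟩ := w
  simp only at hw1
  subst hw1
  have := hconst wm hlt a wx v hv hu
  rw [hw] at this
  rcases hv with rfl | ⟨k, hk, x, rfl⟩
  · exact Option.some_ne_none _ this
  · have := Option.some_injective _ this.symm
    have hkm : k = wm := (Sigma.mk.inj_iff.mp this.symm).1.symm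
    exact absurd (hkm ▸ hk) (not_lt.mpr hlt)
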